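/- Let V be a vector space over ℂ and let Δ ⊆ V ∖ {0}. Suppose Σ' and Σ'' are root bases for Δ, let α ∈ Δ⁺(Σ'), and assume Δ⁺(Σ') ∖ {nα : n ∈ ℤ, n ≥ 1} = Δ⁺(Σ'') ∖ {−nα : n ∈ ℤ, n ≥ 1}. Then α ∈ Σ' and −α ∈ Σ''. -/

import Mathlib

/-- The set of nonzero linear combinations of elements of `S` with nonnegative
integer coefficients (denoted `ℕΣ` in the paper). -/
def nnSpan {V : Type*} [AddCommGroup V] [Module ℂ V] (S : Finset V) : Set V :=
  {x | x ≠ 0 ∧ ∃ c : V → ℕ, x = ∑ v ∈ S, (c v : ℂ) • v}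

/-- The positive roots with respect to a base: `Δ⁺(Σ) = Δ ∩ ℕΣ`. -/
def posRoots {V : Type*} [AddCommGroup V] [Module ℂ V] (Δ : Set V) (S : Finset V) : Set V :=
  Δ ∩ nnSpan S

/-- `S` is a root base for `Δ`: it is a finite linearly independent subset of `Δ`
such that `Δ` is the disjoint union of `Δ⁺(S)` and `-Δ⁺(S)`. -/
def IsRootBase {V : Type*} [AddCommGroup V] [Module ℂ V] (Δ : Set V) (S : Finset V) : Prop :=
  (S : Set V) ⊆ Δ ∧
  LinearIndependent ℂ (fun v : (S : Set V) => (v : V)) ∧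
  Δ = posRoots Δ S ∪ (-(posRoots Δ S)) ∧
  Disjoint (posRoots Δ S) (-(posRoots Δ S))

section Aux

variable {V : Type*} [AddCommGroup V] [Module ℂ V]

lemma sum_mem_closure' (S : Finset V) (c : V → ℕ) :
    (∑ v ∈ S, (c v : ℂ) • v) ∈ AddSubmonoid.closure (S : Set V) := by
  refine AddSubmonoid.sum_mem _ fun v hv => ?_
  have h : ((c v : ℂ)) • v = c v • v := Nat.cast_smul_eq_nsmul ℂ _ _
  rw [h]
  exact nsmul_mem (AddSubmonoid.subset_closure hv) (c v)

lemma mem_closure_iff' (S : Finset V) (x : V) :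
    x ∈ AddSubmonoid.closure (S : Set V) ↔ ∃ c : V → ℕ, x = ∑ v ∈ S, (c v : ℂ) • v := by
  classical
  constructor
  · intro hx
    induction hx using AddSubmonoid.closure_induction with
    | mem y hy =>
      refine ⟨fun v => if v = y then 1 else 0, ?_⟩
      rw [Finset.sum_eq_single y]
      · simp
      · intro b hb hby; simp [hby]
      · intro h; exact absurd hy h
    | zero => exact ⟨0, by simp⟩
    | add a b _ _ ha hb =>
      obtain ⟨c1, hc1⟩ := ha; obtain ⟨c2, hc2⟩ := hb
      refine ⟨c1 + c2, ?_⟩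
      simp only [Pi.add_apply, Nat.cast_add, add_smul, Finset.sum_add_distrib, hc1, hc2]
  · rintro ⟨c, rfl⟩; exact sum_mem_closure' S c

lemma mem_nnSpan_iff (S : Finset V) (x : V) :
    x ∈ nnSpan S ↔ x ≠ 0 ∧ x ∈ AddSubmonoid.closure (S : Set V) := by
  rw [nnSpan, Set.mem_setOf_eq, mem_closure_iff']

lemma coeff_eq_zero (S : Finset V)
    (hind : LinearIndependent ℂ (fun v : (S : Set V) => (v : V)))
    (g : V → ℂ) (h : ∑ v ∈ S, g v • v = 0) : ∀ v ∈ S, g v = 0 := by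
  have key := Fintype.linearIndependent_iff.mp hind (fun i => g i)
  have hsum : ∑ i : (S : Set V), g i • (i : V) = 0 := by
    rw [Finset.sum_set_coe (f := fun v => g v • v)]; simpa using h
  intro v hv
  exact key hsum ⟨v, by simpa using hv⟩

/-- If a base element equals `n • β` with `n ≥ 1` and `β` is a nonnegative
combination of the base, then it equals `β`. -/
lemma base_elt_eq (S : Finset V)
    (hind : LinearIndependent ℂ (fun v : (S : Set V) => (v : V)))
    (β : V) (c : V → ℕ) (hβ : β = ∑ v ∈ S, (c v : ℂ) • v)
    (v0 : V) (hv0 : v0 ∈ S) (n : ℤ) (hn : 1 ≤ n) (hv0eq : v0 = n • β) :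
    v0 = β := by
  classical
  set g : V → ℂ := fun v => (n : ℂ) * (c v) - (if v = v0 then 1 else 0) with hg
  have hsum : ∑ v ∈ S, g v • v = 0 := by
    have h1 : ∑ v ∈ S, ((n : ℂ) * (c v)) • v = n • β := by
      rw [hβ, Finset.smul_sum]
      refine Finset.sum_congr rfl fun v hv => ?_
      rw [← Int.cast_smul_eq_zsmul ℂ n ((c v : ℂ) • v), smul_smul]
    have h2 : ∑ v ∈ S, (if v = v0 then (1 : ℂ) else 0) • v = v0 := by
      rw [Finset.sum_eq_single v0]
      · simp
      · intro b hb hbv; simp [hbv]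
      · intro h; exact absurd hv0 h
    calc ∑ v ∈ S, g v • v = n • β - v0 := by
          simp only [hg, sub_smul, Finset.sum_sub_distrib, h1, h2]
      _ = 0 := by rw [← hv0eq, sub_self]
  have hz := coeff_eq_zero S hind g hsum v0 hv0
  simp only [hg, if_pos rfl] at hz
  have hcast : ((n * (c v0 : ℤ) : ℤ) : ℂ) = ((1 : ℤ) : ℂ) := by
    push_cast
    exact sub_eq_zero.mp hz
  have hint : n * (c v0 : ℤ) = 1 := Int.cast_injective hcast
  have hn1 : n = 1 := by
    rcases Int.mul_eq_one_iff_eq_one_or_neg_one.mp hint with ⟨h, _⟩ | ⟨h, _⟩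
    · exact h
    · omega
  rw [hv0eq, hn1, one_smul]

end Aux

theorem reflexion_property_i
    {V : Type*} [AddCommGroup V] [Module ℂ V]
    (Δ : Set V) (hΔ : (0 : V) ∉ Δ)
    (B1 B2 : Finset V)
    (hB1 : IsRootBase Δ B1) (hB2 : IsRootBase Δ B2)
    (α : V) (hα : α ∈ posRoots Δ B1)
    (hrefl : posRoots Δ B1 \ {x | ∃ n : ℤ, 1 ≤ n ∧ x = n • α}
           = posRoots Δ B2 \ {x | ∃ n : ℤ, 1 ≤ n ∧ x = -(n • α)}) :
    α ∈ B1 ∧ -α ∈ B2 := by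
  classical
  obtain ⟨hB1sub, hB1ind, hB1eq, hB1disj⟩ := hB1
  obtain ⟨hB2sub, hB2ind, hB2eq, hB2disj⟩ := hB2
  have hα0 : α ≠ 0 := fun h => hΔ (h ▸ hα.1)
  -- base elements are positive roots
  have base_mem_pos : ∀ (S : Finset V), (S : Set V) ⊆ Δ → ∀ v ∈ S, v ∈ posRoots Δ S := by
    intro S hS v hv
    refine ⟨hS hv, ?_, fun w => if w = v then 1 else 0, ?_⟩
    · intro h; exact hΔ (h ▸ hS hv)
    · rw [Finset.sum_eq_single v]
      · simp
      · intro b hb hbv; simp [hbv]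
      · intro h; exact absurd hv h
  -- -α is in Δ
  have hnegαΔ : -α ∈ Δ := by
    rw [hB1eq]
    right
    simpa using hα
  -- α is not in the "negative multiples of α" removed set
  have hαnotneg : α ∉ {x | ∃ n : ℤ, 1 ≤ n ∧ x = -(n • α)} := by
    rintro ⟨n, hn, heq⟩
    have : ((1 : ℂ) + (n : ℂ)) • α = 0 := by
      rw [add_smul, one_smul, Int.cast_smul_eq_zsmul]
      rw [eq_neg_iff_add_eq_zero] at heq
      exact heq
    have hne : ((1 : ℂ) + (n : ℂ)) ≠ 0 := by
      intro h
      have h2 : ((1 + n : ℤ) : ℂ) = ((0 : ℤ) : ℂ) := by push_cast; exact h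
      have h3 := Int.cast_injective h2
      omega
    exact hα0 ((smul_eq_zero.mp this).resolve_left hne)
  -- α is in the removed set on the B1 side
  have hαinmul : α ∈ {x | ∃ n : ℤ, 1 ≤ n ∧ x = n • α} := ⟨1, le_refl 1, by simp⟩
  -- -α ∈ posRoots Δ B2
  have hnegα2 : -α ∈ posRoots Δ B2 := by
    have := hnegαΔ
    rw [hB2eq] at this
    rcases this with h | h
    · exact h
    · exfalso
      have hα2 : α ∈ posRoots Δ B2 := by simpa using h
      have : α ∈ posRoots Δ B1 \ {x | ∃ n : ℤ, 1 ≤ n ∧ x = n • α} := by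
        rw [hrefl]; exact ⟨hα2, hαnotneg⟩
      exact this.2 hαinmul
  constructor
  · -- α ∈ B1
    obtain ⟨-, c, hc⟩ := hα.2
    by_cases hex : ∃ v0 ∈ B1, ∃ n : ℤ, 1 ≤ n ∧ v0 = n • α
    · obtain ⟨v0, hv0, n, hn, hv0eq⟩ := hex
      have := base_elt_eq B1 hB1ind α c hc v0 hv0 n hn hv0eq
      rwa [← this]
    · exfalso
      push_neg at hex
      -- every element of B1 is in posRoots Δ B2
      have hB1in2 : ∀ v ∈ B1, v ∈ posRoots Δ B2 := by
        intro v hv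
        have h1 : v ∈ posRoots Δ B1 \ {x | ∃ n : ℤ, 1 ≤ n ∧ x = n • α} := by
          refine ⟨base_mem_pos B1 hB1sub v hv, ?_⟩
          rintro ⟨n, hn, heq⟩
          exact hex v hv n hn heq
        rw [hrefl] at h1
        exact h1.1
      -- hence α ∈ posRoots Δ B2
      have hα2 : α ∈ posRoots Δ B2 := by
        refine ⟨hα.1, (mem_nnSpan_iff B2 α).mpr ⟨hα0, ?_⟩⟩
        rw [hc]
        refine AddSubmonoid.sum_mem _ fun v hv => ?_
        have h : ((c v : ℂ)) • v = c v • v := Nat.cast_smul_eq_nsmul ℂ _ _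
        rw [h]
        exact nsmul_mem ((mem_nnSpan_iff B2 v).mp (hB1in2 v hv).2).2 (c v)
      exact Set.disjoint_left.mp hB2disj hα2 (by simpa using hnegα2)
  · -- -α ∈ B2
    obtain ⟨-, d, hd⟩ := hnegα2.2
    by_cases hex : ∃ v0 ∈ B2, ∃ n : ℤ, 1 ≤ n ∧ v0 = -(n • α)
    · obtain ⟨v0, hv0, n, hn, hv0eq⟩ := hex
      have hv0eq' : v0 = n • (-α) := by rw [hv0eq, smul_neg]
      have := base_elt_eq B2 hB2ind (-α) d hd v0 hv0 n hn hv0eq'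
      rwa [← this]
    · exfalso
      push_neg at hex
      have hB2in1 : ∀ v ∈ B2, v ∈ posRoots Δ B1 := by
        intro v hv
        have h1 : v ∈ posRoots Δ B2 \ {x | ∃ n : ℤ, 1 ≤ n ∧ x = -(n • α)} := by
          refine ⟨base_mem_pos B2 hB2sub v hv, ?_⟩
          rintro ⟨n, hn, heq⟩
          exact hex v hv n hn heq
        rw [← hrefl] at h1
        exact h1.1
      have hnegα0 : -α ≠ 0 := fun h => hΔ (h ▸ hnegαΔ)
      have hnegα1 : -α ∈ posRoots Δ B1 := by
        refine ⟨hnegαΔ, (mem_nnSpan_iff B1 (-α)).mpr ⟨hnegα0, ?_⟩⟩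
        rw [hd]
        refine AddSubmonoid.sum_mem _ fun v hv => ?_
        have h : ((d v : ℂ)) • v = d v • v := Nat.cast_smul_eq_nsmul ℂ _ _
        rw [h]
        exact nsmul_mem ((mem_nnSpan_iff B1 v).mp (hB2in1 v hv).2).2 (d v)
      exact Set.disjoint_left.mp hB1disj hα (by simpa using hnegα1)
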